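/- Let (V, ω) be a complex symplectic vector space of dimension 2n and let α, β, γ be Lagrangian subspaces. Let δ and δ′ be Lagrangian subspaces with δ ∩ α = δ ∩ β = δ ∩ γ = {0} and δ′ ∩ α = δ′ ∩ β = δ′ ∩ γ = {0}. Then m⁻(Q(α,δ;β)) + m⁻(Q(β,δ;γ)) + m⁻(Q(α,δ′;γ)) = m⁻(Q(α,δ′;β)) + m⁻(Q(β,δ′;γ)) + m⁻(Q(α,δ;γ)); that is, the triple index i(α,β,γ) := m⁻(Q(α,δ;β)) + m⁻(Q(β,δ;γ)) − m⁻(Q(α,δ;γ)) is independent of the choice of δ. -/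

import Mathlib

open Module Submodule

/-- The annihilator of a subspace `lam` with respect to a sesquilinear form `ω`
(linear in the first variable, conjugate-linear in the second). -/
def symplAnn {V : Type*} [AddCommGroup V] [Module ℂ V]
    (ω : V →ₗ[ℂ] V →ₗ⋆[ℂ] ℂ) (lam : Submodule ℂ V) : Submodule ℂ V where
  carrier := {x | ∀ y ∈ lam, ω x y = 0}
  add_mem' := by
    intro a b ha hb y hy
    simp [ha y hy, hb y hy]
  zero_mem' := by
    intro y hy
    simp
  smul_mem' := by
    intro c x hx y hy
    simp [hx y hy]

/-- The negative Morse index `m⁻(Q(α,β;γ))` of the Hermitian form `Q(α,β;γ)` on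
`α ∩ (β + γ)` given by `Q(x₁,x₂) = ω x₁ z₂` whenever `x₂ = -y₂ + z₂` with
`y₂ ∈ β`, `z₂ ∈ γ`: the maximal dimension of a subspace on which `Q` is
negative definite. -/
noncomputable def negIndexQ {V : Type*} [AddCommGroup V] [Module ℂ V]
    (ω : V →ₗ[ℂ] V →ₗ⋆[ℂ] ℂ) (α β γ : Submodule ℂ V) : ℕ :=
  sSup {n : ℕ | ∃ W : Submodule ℂ V, W ≤ α ⊓ (β ⊔ γ) ∧ Module.finrank ℂ W = n ∧
    ∀ x ∈ W, x ≠ 0 → ∀ y ∈ β, ∀ z ∈ γ, x = -y + z → (ω x z).re < 0}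

/-- The positive Morse index `m⁺(Q(α,β;γ))` of the Hermitian form `Q(α,β;γ)` on
`α ∩ (β + γ)`: the maximal dimension of a subspace on which `Q` is positive
definite. -/
noncomputable def posIndexQ {V : Type*} [AddCommGroup V] [Module ℂ V]
    (ω : V →ₗ[ℂ] V →ₗ⋆[ℂ] ℂ) (α β γ : Submodule ℂ V) : ℕ :=
  sSup {n : ℕ | ∃ W : Submodule ℂ V, W ≤ α ⊓ (β ⊔ γ) ∧ Module.finrank ℂ W = n ∧
    ∀ x ∈ W, x ≠ 0 → ∀ y ∈ β, ∀ z ∈ γ, x = -y + z → 0 < (ω x z).re}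



section NegIdx

variable {M : Type*} [AddCommGroup M] [Module ℂ M]

noncomputable def negIdx (Φ : M →ₗ[ℂ] M →ₗ⋆[ℂ] ℂ) (U : Submodule ℂ M) : ℕ :=
  sSup {k : ℕ | ∃ W : Submodule ℂ M, W ≤ U ∧ Module.finrank ℂ W = k ∧
    ∀ x ∈ W, x ≠ 0 → (Φ x x).re < 0}

variable [FiniteDimensional ℂ M] (Φ : M →ₗ[ℂ] M →ₗ⋆[ℂ] ℂ)

structure SylDec (U N P : Submodule ℂ M) : Prop where
  hNU : N ≤ U
  hPU : P ≤ U
  hsup : N ⊔ P = U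
  hinf : N ⊓ P = ⊥
  hneg : ∀ x ∈ N, x ≠ 0 → (Φ x x).re < 0
  hpos : ∀ x ∈ P, 0 ≤ (Φ x x).re
  hortho : ∀ x ∈ N, ∀ y ∈ P, Φ x y = 0

theorem sylDec_exists (U : Submodule ℂ M)
    (hH : ∀ x ∈ U, ∀ y ∈ U, Φ y x = (starRingEnd ℂ) (Φ x y)) :
    ∃ N P : Submodule ℂ M, SylDec Φ U N P := by
  suffices H : ∀ (d : ℕ) (U : Submodule ℂ M), finrank ℂ U ≤ d →
      (∀ x ∈ U, ∀ y ∈ U, Φ y x = (starRingEnd ℂ) (Φ x y)) →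
      ∃ N P : Submodule ℂ M, SylDec Φ U N P from H (finrank ℂ U) U le_rfl hH
  intro d
  induction d with
  | zero =>
    intro U hd _
    have hU : U = ⊥ :=
      (Submodule.finrank_eq_zero (R := ℂ) (M := M) (S := U)).mp (Nat.le_zero.mp hd)
    exact ⟨⊥, ⊥, by constructor <;> simp [hU]⟩
  | succ d ih =>
    intro U hd hH
    by_cases hv : ∃ v ∈ U, (Φ v v).re ≠ 0
    · obtain ⟨v, hvU, hvv⟩ := hv
      have hv0 : v ≠ 0 := by rintro rfl; simp at hvv
      have hΦvv : Φ v v ≠ 0 := fun h => hvv (by simp [h])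
      set U' : Submodule ℂ M := U ⊓ LinearMap.ker (Φ v) with hU'
      have hU'le : U' ≤ U := inf_le_left
      have hker : ∀ x ∈ U', Φ v x = 0 := fun x hx => hx.2
      have hsplit : (ℂ ∙ v) ⊔ U' = U := by
        apply le_antisymm
        · exact sup_le ((Submodule.span_singleton_le_iff_mem v U).mpr hvU) hU'le
        · intro u hu
          have hdec : u = ((starRingEnd ℂ) (Φ v u / Φ v v)) • v +
              (u - ((starRingEnd ℂ) (Φ v u / Φ v v)) • v) := by abel
          rw [hdec]
          apply Submodule.add_mem_sup
            (Submodule.smul_mem _ _ (Submodule.mem_span_singleton_self v))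
          refine ⟨Submodule.sub_mem _ hu (Submodule.smul_mem _ _ hvU), ?_⟩
          have hz : Φ v (u - ((starRingEnd ℂ) (Φ v u / Φ v v)) • v) = 0 := by
            simp only [map_sub, LinearMap.map_smulₛₗ, Complex.conj_conj]
            rw [smul_eq_mul, div_mul_cancel₀ _ hΦvv, sub_self]
          exact hz
      have hdisj : (ℂ ∙ v) ⊓ U' = ⊥ := by
        rw [Submodule.eq_bot_iff]
        rintro x ⟨hx1, hx2⟩
        obtain ⟨c, rfl⟩ := Submodule.mem_span_singleton.mp hx1
        have h0 := hker _ hx2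
        rw [LinearMap.map_smulₛₗ] at h0
        rcases mul_eq_zero.mp h0 with h | h
        · simp [show c = 0 by simpa using h]
        · exact absurd h hΦvv
      have hfr : finrank ℂ U' ≤ d := by
        have h1 : finrank ℂ (ℂ ∙ v) = 1 := finrank_span_singleton hv0
        have h2 := Submodule.finrank_sup_add_finrank_inf_eq (ℂ ∙ v) U'
        rw [hsplit, hdisj, h1] at h2
        simp only [finrank_bot, add_zero] at h2
        omega
      obtain ⟨N', P', hd'⟩ := ih U' hfr
        (fun x hx y hy => hH x (hU'le hx) y (hU'le hy))
      have hvme : ∀ x ∈ U', Φ x v = 0 := fun x hx => by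
        rw [hH v hvU x (hU'le hx), hker x hx, map_zero]
      have hdiag : ∀ (c : ℂ) (w : M), w ∈ U' →
          (Φ (c • v + w) (c • v + w)).re = Complex.normSq c * (Φ v v).re + (Φ w w).re := by
        intro c w hw
        have e1 : Φ (c • v + w) (c • v + w) = c * (starRingEnd ℂ) c * Φ v v + Φ w w := by
          simp only [map_add, LinearMap.add_apply, LinearMap.map_smulₛₗ, LinearMap.smul_apply,
            RingHom.id_apply, smul_eq_mul]
          rw [hker w hw, hvme w hw]
          ring
        rw [e1, Complex.mul_conj]
        simp [Complex.add_re, Complex.re_ofReal_mul]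
      -- x in span v ⊔ W with W ≤ U' : canonical splitting
      have hmemsup : ∀ (W : Submodule ℂ M), W ≤ U' → ∀ x ∈ (ℂ ∙ v) ⊔ W,
          ∃ (c : ℂ) (w : M), w ∈ W ∧ x = c • v + w := by
        intro W hW x hx
        obtain ⟨y, hy, w, hw, rfl⟩ := Submodule.mem_sup.mp hx
        obtain ⟨c, rfl⟩ := Submodule.mem_span_singleton.mp hy
        exact ⟨c, w, hw, rfl⟩
      rcases lt_or_gt_of_ne hvv with hsgn | hsgn
      · -- v is negative: N := span v ⊔ N'
        refine ⟨(ℂ ∙ v) ⊔ N', P', ?_, le_trans hd'.hPU hU'le, ?_, ?_, ?_, hd'.hpos, ?_⟩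
        · exact sup_le ((Submodule.span_singleton_le_iff_mem v U).mpr hvU)
            (le_trans hd'.hNU hU'le)
        · rw [sup_assoc, hd'.hsup, hsplit]
        · rw [Submodule.eq_bot_iff]
          rintro x ⟨hx1, hx2⟩
          obtain ⟨c, w, hw, rfl⟩ := hmemsup N' hd'.hNU _ hx1
          have hcv : c • v ∈ (ℂ ∙ v) ⊓ U' := by
            refine ⟨Submodule.smul_mem _ _ (Submodule.mem_span_singleton_self v), ?_⟩
            have : c • v = (c • v + w) - w := by abel
            rw [this]
            exact Submodule.sub_mem _ (hd'.hPU hx2) (hd'.hNU hw)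
          rw [hdisj] at hcv
          have hcv0 : c • v = 0 := hcv
          rw [hcv0, zero_add] at hx2 ⊢
          have : w ∈ N' ⊓ P' := ⟨hw, hx2⟩
          rw [hd'.hinf] at this
          exact this
        · intro x hx hx0
          obtain ⟨c, w, hw, rfl⟩ := hmemsup N' hd'.hNU _ hx
          rw [hdiag c w (hd'.hNU hw)]
          rcases eq_or_ne w 0 with rfl | hw0
          · have hc : c ≠ 0 := by rintro rfl; simp at hx0
            have : 0 < Complex.normSq c := Complex.normSq_pos.mpr hc
            simp only [map_zero, LinearMap.zero_apply, Complex.zero_re, add_zero]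
            exact mul_neg_of_pos_of_neg this hsgn
          · have h1 : (Φ w w).re < 0 := hd'.hneg w hw hw0
            have h2 : Complex.normSq c * (Φ v v).re ≤ 0 :=
              mul_nonpos_of_nonneg_of_nonpos (Complex.normSq_nonneg c) (le_of_lt hsgn)
            linarith
        · intro x hx y hy
          obtain ⟨c, w, hw, rfl⟩ := hmemsup N' hd'.hNU _ hx
          have : Φ (c • v + w) y = c • Φ v y + Φ w y := by
            simp [map_add, LinearMap.map_smul]
          rw [this, hker y (hd'.hPU hy), hd'.hortho w hw y hy]
          simp
      · -- v is positive: P := span v ⊔ P'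
        refine ⟨N', (ℂ ∙ v) ⊔ P', le_trans hd'.hNU hU'le, ?_, ?_, ?_, hd'.hneg, ?_, ?_⟩
        · exact sup_le ((Submodule.span_singleton_le_iff_mem v U).mpr hvU)
            (le_trans hd'.hPU hU'le)
        · rw [← sup_assoc, sup_comm N' (ℂ ∙ v), sup_assoc, hd'.hsup, hsplit]
        · rw [Submodule.eq_bot_iff]
          rintro x ⟨hx1, hx2⟩
          obtain ⟨c, w, hw, rfl⟩ := hmemsup P' hd'.hPU _ hx2
          have hcv : c • v ∈ (ℂ ∙ v) ⊓ U' := by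
            refine ⟨Submodule.smul_mem _ _ (Submodule.mem_span_singleton_self v), ?_⟩
            have : c • v = (c • v + w) - w := by abel
            rw [this]
            exact Submodule.sub_mem _ (hd'.hNU hx1) (hd'.hPU hw)
          rw [hdisj] at hcv
          have hcv0 : c • v = 0 := hcv
          rw [hcv0, zero_add] at hx1 ⊢
          have : w ∈ N' ⊓ P' := ⟨hx1, hw⟩
          rw [hd'.hinf] at this
          exact this
        · intro x hx
          obtain ⟨c, w, hw, rfl⟩ := hmemsup P' hd'.hPU _ hx
          rw [hdiag c w (hd'.hPU hw)]
          have h1 : 0 ≤ (Φ w w).re := hd'.hpos w hw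
          have h2 : 0 ≤ Complex.normSq c * (Φ v v).re :=
            mul_nonneg (Complex.normSq_nonneg c) (le_of_lt hsgn)
          linarith
        · intro x hx y hy
          obtain ⟨c, w, hw, rfl⟩ := hmemsup P' hd'.hPU _ hy
          have : Φ x (c • v + w) = (starRingEnd ℂ) c • Φ x v + Φ x w := by
            simp [map_add, LinearMap.map_smulₛₗ]
          rw [this, hvme x (hd'.hNU hx), hd'.hortho x hx w hw]
          simp
    · refine ⟨⊥, U, bot_le, le_rfl, by simp, by simp, by simp, ?_, by simp⟩
      intro x hx
      push_neg at hv
      rw [hv x hx]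

end NegIdx
section NegIdx2

variable {M : Type*} [AddCommGroup M] [Module ℂ M]
variable [FiniteDimensional ℂ M] (Φ : M →ₗ[ℂ] M →ₗ⋆[ℂ] ℂ)

theorem negIdx_bddAbove (U : Submodule ℂ M) :
    BddAbove {k : ℕ | ∃ W : Submodule ℂ M, W ≤ U ∧ Module.finrank ℂ W = k ∧
      ∀ x ∈ W, x ≠ 0 → (Φ x x).re < 0} := by
  refine ⟨finrank ℂ M, ?_⟩
  rintro k ⟨W, _, rfl, _⟩
  exact W.finrank_le

theorem negIdx_eq_of_sylDec {U N P : Submodule ℂ M} (h : SylDec Φ U N P) :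
    negIdx Φ U = finrank ℂ N := by
  have hNP : finrank ℂ N + finrank ℂ P = finrank ℂ U := by
    have := Submodule.finrank_sup_add_finrank_inf_eq N P
    rw [h.hsup, h.hinf] at this
    simpa using this.symm
  apply le_antisymm
  · refine csSup_le ⟨0, ?_⟩ ?_
    · exact ⟨⊥, bot_le, finrank_bot ℂ M, by simp⟩
    rintro k ⟨W, hWU, rfl, hWneg⟩
    have hWP : W ⊓ P = ⊥ := by
      rw [Submodule.eq_bot_iff]
      intro x hx
      by_contra hx0
      exact absurd (h.hpos x hx.2) (not_le.mpr (hWneg x hx.1 hx0))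
    have := Submodule.finrank_sup_add_finrank_inf_eq W P
    rw [hWP] at this
    have hle : finrank ℂ ↥(W ⊔ P) ≤ finrank ℂ U :=
      Submodule.finrank_mono (sup_le hWU h.hPU)
    simp only [finrank_bot, add_zero] at this
    omega
  · exact le_csSup (negIdx_bddAbove Φ U) ⟨N, h.hNU, rfl, h.hneg⟩

theorem negIdx_add_of_orthogonal {U W₁ W₂ : Submodule ℂ M}
    (hH : ∀ x ∈ U, ∀ y ∈ U, Φ y x = (starRingEnd ℂ) (Φ x y))
    (h1 : W₁ ≤ U) (h2 : W₂ ≤ U) (hsup : W₁ ⊔ W₂ = U) (hinf : W₁ ⊓ W₂ = ⊥)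
    (hortho : ∀ x ∈ W₁, ∀ y ∈ W₂, Φ x y = 0) :
    negIdx Φ U = negIdx Φ W₁ + negIdx Φ W₂ := by
  obtain ⟨N₁, P₁, hd₁⟩ := sylDec_exists Φ W₁
    (fun x hx y hy => hH x (h1 hx) y (h1 hy))
  obtain ⟨N₂, P₂, hd₂⟩ := sylDec_exists Φ W₂
    (fun x hx y hy => hH x (h2 hx) y (h2 hy))
  have horth' : ∀ x ∈ W₂, ∀ y ∈ W₁, Φ x y = 0 := fun x hx y hy => by
    rw [hH y (h1 hy) x (h2 hx), hortho y hy x hx, map_zero]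
  -- membership decomposition
  have hms : ∀ (A B : Submodule ℂ M), ∀ x ∈ A ⊔ B, ∃ a ∈ A, ∃ b ∈ B, x = a + b := by
    intro A B x hx
    obtain ⟨a, ha, b, hb, rfl⟩ := Submodule.mem_sup.mp hx
    exact ⟨a, ha, b, hb, rfl⟩
  have hdiagsum : ∀ a ∈ W₁, ∀ b ∈ W₂, Φ (a + b) (a + b) = Φ a a + Φ b b := by
    intro a ha b hb
    simp only [map_add, LinearMap.add_apply]
    rw [hortho a ha b hb, horth' b hb a ha]
    ring
  have hdisj' : ∀ a ∈ W₁, ∀ b ∈ W₂, a + b = 0 → a = 0 ∧ b = 0 := by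
    intro a ha b hb hab
    have : a ∈ W₁ ⊓ W₂ := ⟨ha, by
      have : a = -b := by linear_combination (norm := abel) hab
      rw [this]; exact Submodule.neg_mem _ hb⟩
    rw [hinf] at this
    have ha0 : a = 0 := this
    constructor
    · exact ha0
    · rw [ha0, zero_add] at hab; exact hab
  have hdec : SylDec Φ U (N₁ ⊔ N₂) (P₁ ⊔ P₂) := by
    constructor
    · exact sup_le (le_trans hd₁.hNU h1) (le_trans hd₂.hNU h2)
    · exact sup_le (le_trans hd₁.hPU h1) (le_trans hd₂.hPU h2)
    · rw [← hsup, ← hd₁.hsup, ← hd₂.hsup]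
      rw [sup_assoc, ← sup_assoc N₂ P₁ P₂, sup_comm N₂ P₁, sup_assoc P₁ N₂ P₂, ← sup_assoc]
    · rw [Submodule.eq_bot_iff]
      rintro x ⟨hxN, hxP⟩
      obtain ⟨n₁, hn₁, n₂, hn₂, rfl⟩ := hms _ _ _ hxN
      obtain ⟨p₁, hp₁, p₂, hp₂, hxeq⟩ := hms _ _ _ hxP
      have hw : n₁ - p₁ ∈ W₁ ⊓ W₂ := by
        constructor
        · exact Submodule.sub_mem _ (hd₁.hNU hn₁) (hd₁.hPU hp₁)
        · have : n₁ - p₁ = p₂ - n₂ := by linear_combination (norm := abel) hxeq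
          rw [this]
          exact Submodule.sub_mem _ (hd₂.hPU hp₂) (hd₂.hNU hn₂)
      rw [hinf] at hw
      have h11 : n₁ = p₁ := by
        have := (Submodule.mem_bot ℂ).mp hw
        linear_combination (norm := abel) this
      have hnp1 : n₁ ∈ N₁ ⊓ P₁ := ⟨hn₁, h11 ▸ hp₁⟩
      rw [hd₁.hinf] at hnp1
      have h10 : n₁ = 0 := hnp1
      have hn2p2 : n₂ = p₂ := by
        have hp10 : p₁ = 0 := by rw [← h11, h10]
        rw [h10, hp10, zero_add, zero_add] at hxeq
        exact hxeq
      have h20 : n₂ ∈ N₂ ⊓ P₂ := ⟨hn₂, by rw [hn2p2]; exact hp₂⟩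
      rw [hd₂.hinf] at h20
      rw [h10, (Submodule.mem_bot ℂ).mp h20, add_zero]
    · intro x hx hx0
      obtain ⟨a, ha, b, hb, rfl⟩ := hms _ _ _ hx
      have hre := hdiagsum a (hd₁.hNU ha) b (hd₂.hNU hb)
      have : (Φ (a+b) (a+b)).re = (Φ a a).re + (Φ b b).re := by rw [hre]; simp
      rw [this]
      rcases eq_or_ne a 0 with rfl | ha0
      · have hb0 : b ≠ 0 := by rintro rfl; simp at hx0
        have := hd₂.hneg b hb hb0
        simp only [map_zero, LinearMap.zero_apply, Complex.zero_re, zero_add]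
        linarith
      · have h1' := hd₁.hneg a ha ha0
        rcases eq_or_ne b 0 with rfl | hb0
        · simp only [map_zero, LinearMap.zero_apply, Complex.zero_re, add_zero]; linarith
        · have h2' := hd₂.hneg b hb hb0; linarith
    · intro x hx
      obtain ⟨a, ha, b, hb, rfl⟩ := hms _ _ _ hx
      have hre := hdiagsum a (hd₁.hPU ha) b (hd₂.hPU hb)
      have : (Φ (a+b) (a+b)).re = (Φ a a).re + (Φ b b).re := by rw [hre]; simp
      rw [this]
      have := hd₁.hpos a ha
      have := hd₂.hpos b hb
      linarith
    · intro x hx y hy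
      obtain ⟨a, ha, b, hb, rfl⟩ := hms _ _ _ hx
      obtain ⟨c, hc, e, he, rfl⟩ := hms _ _ _ hy
      simp only [map_add, LinearMap.add_apply]
      rw [hd₁.hortho a ha c hc, hd₂.hortho b hb e he,
        hortho a (hd₁.hNU ha) e (hd₂.hPU he), horth' b (hd₂.hNU hb) c (hd₁.hPU hc)]
      ring
  rw [negIdx_eq_of_sylDec Φ hdec, negIdx_eq_of_sylDec Φ hd₁, negIdx_eq_of_sylDec Φ hd₂]
  have hN12 : N₁ ⊓ N₂ = ⊥ := by
    rw [Submodule.eq_bot_iff]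
    intro x hx
    have : x ∈ W₁ ⊓ W₂ := ⟨hd₁.hNU hx.1, hd₂.hNU hx.2⟩
    rw [hinf] at this; exact this
  have := Submodule.finrank_sup_add_finrank_inf_eq N₁ N₂
  rw [hN12] at this
  simp only [finrank_bot, add_zero] at this
  omega

/-- congruence invariance of `negIdx` -/
theorem negIdx_congr {M₂ : Type*} [AddCommGroup M₂] [Module ℂ M₂] [FiniteDimensional ℂ M₂]
    (Φ₂ : M₂ →ₗ[ℂ] M₂ →ₗ⋆[ℂ] ℂ) (f : M →ₗ[ℂ] M₂) (hf : Function.Injective f)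
    (U : Submodule ℂ M) (hdiag : ∀ x ∈ U, ((Φ₂ (f x)) (f x)).re = ((Φ x) x).re) :
    negIdx Φ₂ (Submodule.map f U) = negIdx Φ U := by
  unfold negIdx
  congr 1
  ext k
  constructor
  · rintro ⟨W, hWU, rfl, hneg⟩
    set W' : Submodule ℂ M := (Submodule.comap f W) ⊓ U with hW'
    have hmap : Submodule.map f W' = W := by
      apply le_antisymm
      · rintro y ⟨x, hx, rfl⟩
        exact hx.1
      · intro y hy
        obtain ⟨x, hxU, rfl⟩ := hWU hy
        exact ⟨x, ⟨hy, hxU⟩, rfl⟩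
    refine ⟨W', inf_le_right, ?_, ?_⟩
    · rw [← hmap]
      exact LinearEquiv.finrank_eq (Submodule.equivMapOfInjective f hf W')
    · intro x hx hx0
      rw [← hdiag x hx.2]
      exact hneg (f x) (hmap ▸ Submodule.mem_map_of_mem hx) (by
        simpa [map_eq_zero_iff f hf] using hx0)
  · rintro ⟨W, hWU, rfl, hneg⟩
    refine ⟨Submodule.map f W, Submodule.map_mono hWU, ?_, ?_⟩
    · exact (LinearEquiv.finrank_eq (Submodule.equivMapOfInjective f hf W)).symm
    · rintro y ⟨x, hx, rfl⟩ hy0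
      rw [hdiag x (hWU hx)]
      exact hneg x hx (by rintro rfl; simp at hy0)

end NegIdx2
section ConjDual

variable {W : Type*} [AddCommGroup W] [Module ℂ W]

/-- the conjugate-dual of a space with a finite basis, coordinatized -/
noncomputable def conjDualEquiv {ι : Type*} [Fintype ι] [DecidableEq ι] (b : Basis ι ℂ W) :
    (W →ₗ⋆[ℂ] ℂ) ≃ₗ[ℂ] (ι → ℂ) where
  toFun f := fun i => f (b i)
  map_add' f g := by funext i; simp
  map_smul' c f := by funext i; simp
  invFun c :=
    { toFun := fun v => ∑ i, (starRingEnd ℂ) (b.repr v i) * c i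
      map_add' := fun v w => by
        simp [map_add, add_mul, Finset.sum_add_distrib]
      map_smul' := fun a v => by
        simp [Finset.mul_sum, mul_assoc] }
  left_inv f := by
    apply LinearMap.ext
    intro v
    simp only [LinearMap.coe_mk, AddHom.coe_mk]
    conv_rhs => rw [← b.sum_repr v]
    rw [map_sum]
    congr 1
    funext i
    rw [LinearMap.map_smulₛₗ, smul_eq_mul]
  right_inv c := by
    funext i
    simp [Basis.repr_self, Finsupp.single_apply, apply_ite]

theorem finrank_conjDual [FiniteDimensional ℂ W] :
    finrank ℂ (W →ₗ⋆[ℂ] ℂ) = finrank ℂ W := by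
  classical
  let b := Module.finBasis ℂ W
  rw [LinearEquiv.finrank_eq (conjDualEquiv b)]
  simp

instance [FiniteDimensional ℂ W] : FiniteDimensional ℂ (W →ₗ⋆[ℂ] ℂ) := by
  classical
  let b := Module.finBasis ℂ W
  exact LinearEquiv.finiteDimensional (conjDualEquiv b).symm

end ConjDual

section Ann

variable {V : Type*} [AddCommGroup V] [Module ℂ V] [FiniteDimensional ℂ V]
variable (ω : V →ₗ[ℂ] V →ₗ⋆[ℂ] ℂ)

/-- v ↦ restriction of ω v to U -/
noncomputable def omRestrict (U : Submodule ℂ V) : V →ₗ[ℂ] (U →ₗ⋆[ℂ] ℂ) where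
  toFun v := (ω v).comp U.subtype
  map_add' v w := by ext u; simp
  map_smul' c v := by ext u; simp

theorem ker_omRestrict (U : Submodule ℂ V) :
    LinearMap.ker (omRestrict ω U) = symplAnn ω U := by
  ext v
  constructor
  · intro hv y hy
    have := congrFun (congrArg DFunLike.coe hv) ⟨y, hy⟩
    simpa [omRestrict] using this
  · intro hv
    apply LinearMap.ext
    rintro ⟨y, hy⟩
    simpa [omRestrict] using hv y hy

theorem omRestrict_surjective
    (hNd : ∀ x : V, (∀ y : V, ω x y = 0) → x = 0) (U : Submodule ℂ V) :
    Function.Surjective (omRestrict ω U) := by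
  -- full map is surjective
  have hfull : Function.Surjective (omRestrict ω ⊤) := by
    have hinj : Function.Injective (omRestrict ω ⊤) := by
      rw [← LinearMap.ker_eq_bot, Submodule.eq_bot_iff, ker_omRestrict]
      intro x hx
      exact hNd x (fun y => hx y trivial)
    have : finrank ℂ (LinearMap.range (omRestrict ω ⊤)) = finrank ℂ ((⊤ : Submodule ℂ V) →ₗ⋆[ℂ] ℂ) := by
      have h1 := LinearMap.finrank_range_add_finrank_ker (omRestrict ω ⊤)
      rw [LinearMap.ker_eq_bot.mpr hinj] at h1
      simp only [finrank_bot, add_zero] at h1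
      rw [h1, finrank_conjDual]
      exact (LinearEquiv.finrank_eq (Submodule.topEquiv (R := ℂ) (M := V))).symm
    rw [← LinearMap.range_eq_top]
    exact Submodule.eq_top_of_finrank_eq this
  intro g
  obtain ⟨Uc, hUc⟩ := Submodule.exists_isCompl U
  -- extend g to ⊤
  set gext : ((⊤ : Submodule ℂ V) →ₗ⋆[ℂ] ℂ) :=
    (g.comp (U.linearProjOfIsCompl Uc hUc)).comp (Submodule.subtype ⊤) with hgext
  obtain ⟨v, hv⟩ := hfull gext
  refine ⟨v, ?_⟩
  apply LinearMap.ext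
  rintro ⟨u, hu⟩
  have h1 : omRestrict ω ⊤ v ⟨u, trivial⟩ = gext ⟨u, trivial⟩ := by rw [hv]
  have h2 : gext ⟨u, trivial⟩ = g ⟨u, hu⟩ := by
    simp only [hgext, LinearMap.comp_apply, Submodule.subtype_apply]
    congr 1
    exact Submodule.linearProjOfIsCompl_apply_left hUc ⟨u, hu⟩
  simpa [omRestrict] using h1.trans h2

theorem finrank_symplAnn
    (hNd : ∀ x : V, (∀ y : V, ω x y = 0) → x = 0) (U : Submodule ℂ V) :
    finrank ℂ (symplAnn ω U) + finrank ℂ U = finrank ℂ V := by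
  have h1 := LinearMap.finrank_range_add_finrank_ker (omRestrict ω U)
  rw [LinearMap.range_eq_top.mpr (omRestrict_surjective ω hNd U), ker_omRestrict] at h1
  have h2 : finrank ℂ ((⊤ : Submodule ℂ (U →ₗ⋆[ℂ] ℂ))) = finrank ℂ U := by
    rw [finrank_top, finrank_conjDual]
  omega

theorem lagrangian_finrank
    (hNd : ∀ x : V, (∀ y : V, ω x y = 0) → x = 0) {L : Submodule ℂ V}
    (hL : L = symplAnn ω L) : 2 * finrank ℂ L = finrank ℂ V := by
  have := finrank_symplAnn ω hNd L
  rw [← hL] at this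
  omega

theorem lagrangian_isCompl
    (hNd : ∀ x : V, (∀ y : V, ω x y = 0) → x = 0) {L₁ L₂ : Submodule ℂ V}
    (h1 : L₁ = symplAnn ω L₁) (h2 : L₂ = symplAnn ω L₂) (hdisj : L₁ ⊓ L₂ = ⊥) :
    IsCompl L₁ L₂ := by
  have hf1 := lagrangian_finrank ω hNd h1
  have hf2 := lagrangian_finrank ω hNd h2
  have hs := Submodule.finrank_sup_add_finrank_inf_eq L₁ L₂
  rw [hdisj] at hs
  simp only [finrank_bot, add_zero] at hs
  have htop : L₁ ⊔ L₂ = ⊤ := by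
    apply Submodule.eq_top_of_finrank_eq
    omega
  exact ⟨disjoint_iff.mpr hdisj, codisjoint_iff.mpr htop⟩

end Ann
section Pull

variable {M₁ W : Type*} [AddCommGroup M₁] [Module ℂ M₁] [AddCommGroup W] [Module ℂ W]

noncomputable def pullForm (A : M₁ →ₗ[ℂ] M₁ →ₗ⋆[ℂ] ℂ) (f g : W →ₗ[ℂ] M₁) :
    W →ₗ[ℂ] W →ₗ⋆[ℂ] ℂ :=
  LinearMap.mk₂'ₛₗ (RingHom.id ℂ) (starRingEnd ℂ) (fun x y => A (f x) (g y))
    (fun x x' y => by simp)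
    (fun c x y => by simp)
    (fun x y y' => by simp)
    (fun c x y => by simp [LinearMap.map_smulₛₗ])

@[simp] theorem pullForm_apply (A : M₁ →ₗ[ℂ] M₁ →ₗ⋆[ℂ] ℂ) (f g : W →ₗ[ℂ] M₁) (x y : W) :
    pullForm A f g x y = A (f x) (g y) := rfl

end Pull

section KeyLemma

variable {V : Type*} [AddCommGroup V] [Module ℂ V] [FiniteDimensional ℂ V]
variable (ω : V →ₗ[ℂ] V →ₗ⋆[ℂ] ℂ)

/-- The key symmetry lemma (Hörmander-type). -/
theorem key_lemma
    (hSkew : ∀ x y : V, ω y x = -(starRingEnd ℂ) (ω x y))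
    (lam mu dl dpp : Submodule ℂ V)
    (hlam : ∀ a ∈ lam, ∀ b ∈ lam, ω a b = 0)
    (hmu : ∀ a ∈ mu, ∀ b ∈ mu, ω a b = 0)
    (hdl : ∀ a ∈ dl, ∀ b ∈ dl, ω a b = 0)
    (hdpp : ∀ a ∈ dpp, ∀ b ∈ dpp, ω a b = 0)
    (hdisj_dl_dpp : dl ⊓ dpp = ⊥) (hdisj_dpp_lam : dpp ⊓ lam = ⊥)
    (hdisj_dpp_mu : dpp ⊓ mu = ⊥)
    (hrank : finrank ℂ lam = finrank ℂ mu)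
    (pi'' p pm'' : V →ₗ[ℂ] V)
    (hπ1 : ∀ v, pi'' v ∈ dpp) (hπ2 : ∀ v, v - pi'' v ∈ dl)
    (hp1 : ∀ v, p v ∈ mu) (hp2 : ∀ v, v - p v ∈ dl)
    (hq1 : ∀ v, pm'' v ∈ mu) (hq2 : ∀ v, v - pm'' v ∈ dpp) :
    negIdx (pullForm ω LinearMap.id pi'') mu + negIdx (pullForm ω LinearMap.id p) lam =
      negIdx (pullForm ω LinearMap.id pi'') lam + negIdx (pullForm ω LinearMap.id pm'') lam := by
  classical
  -- elementary consequences of skewness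
  have hconj : ∀ a b : V, (starRingEnd ℂ) (ω a b) = - ω b a := by
    intro a b
    rw [hSkew b a]
    simp
  -- projections kill / fix the relevant subspaces
  have hπdl : ∀ d ∈ dl, pi'' d = 0 := by
    intro d hd
    have h1 : pi'' d ∈ dl ⊓ dpp := by
      constructor
      · have : pi'' d = d - (d - pi'' d) := by abel
        rw [this]
        exact Submodule.sub_mem _ hd (hπ2 d)
      · exact hπ1 d
    rw [hdisj_dl_dpp] at h1
    exact h1
  have hπdpp : ∀ e ∈ dpp, pi'' e = e := by
    intro e he
    have h1 : e - pi'' e ∈ dl ⊓ dpp := ⟨hπ2 e, Submodule.sub_mem _ he (hπ1 e)⟩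
    rw [hdisj_dl_dpp] at h1
    have : e - pi'' e = 0 := h1
    linear_combination (norm := abel) -this
  -- the master identity
  have hM : ∀ v w : V, ω v (pi'' w) + ω (pi'' v) w = ω v w := by
    intro v w
    have hv : v = (v - pi'' v) + pi'' v := by abel
    have hw : w = (w - pi'' w) + pi'' w := by abel
    have e1 : ω v w = ω (v - pi'' v) (w - pi'' w) + ω (v - pi'' v) (pi'' w)
        + ω (pi'' v) (w - pi'' w) + ω (pi'' v) (pi'' w) := by
      conv_lhs => rw [hv, hw]
      simp only [map_add, LinearMap.add_apply]
      ring
    rw [hdl _ (hπ2 v) _ (hπ2 w), hdpp _ (hπ1 v) _ (hπ1 w)] at e1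
    have e2 : ω v (pi'' w) = ω (v - pi'' v) (pi'' w) + ω (pi'' v) (pi'' w) := by
      conv_lhs => rw [hv]
      simp only [map_add, LinearMap.add_apply]
    have e3 : ω (pi'' v) w = ω (pi'' v) (w - pi'' w) + ω (pi'' v) (pi'' w) := by
      conv_lhs => rw [hw]
      simp only [map_add]
    rw [hdpp _ (hπ1 v) _ (hπ1 w)] at e2 e3
    linear_combination e2 + e3 - e1
  -- swap identity on isotropic pairs
  have hswap : ∀ a b : V, ω b a = 0 → ω b (pi'' a - a) = - ω (pi'' b - b) a := by
    intro a b h0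
    have h1 := hM b a
    simp only [map_sub, LinearMap.sub_apply]
    linear_combination h1 - h0
  -- the big form on V × V
  set Z : V × V →ₗ[ℂ] V := LinearMap.fst ℂ V V with hZ
  set X : V × V →ₗ[ℂ] V := LinearMap.snd ℂ V V with hX
  set Φ : (V × V) →ₗ[ℂ] (V × V) →ₗ⋆[ℂ] ℂ :=
    pullForm ω Z (pi''.comp Z - Z) + pullForm ω X (pi''.comp Z - Z)
      + pullForm ω X (pi''.comp X - X) - pullForm ω (pi''.comp Z - Z) X with hΦ
  have hΦapp : ∀ z x z' x' : V, Φ (z, x) (z', x') =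
      ω z (pi'' z' - z') + ω x (pi'' z' - z') + ω x (pi'' x' - x') - ω (pi'' z - z) x' := by
    intro z x z' x'
    simp [hΦ, hZ, hX]
  set E : Submodule ℂ (V × V) := mu.prod lam with hE
  -- Hermitian on E
  have hHerm : ∀ v ∈ E, ∀ w ∈ E, Φ w v = (starRingEnd ℂ) (Φ v w) := by
    rintro ⟨z, x⟩ ⟨hz, hx⟩ ⟨z', x'⟩ ⟨hz', hx'⟩
    rw [hΦapp, hΦapp]
    have key1 : ω z' (pi'' z - z) = - ω (pi'' z' - z') z := hswap z z' (hmu z' hz' z hz)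
    have key2 : ω x' (pi'' x - x) = - ω (pi'' x' - x') x := hswap x x' (hlam x' hx' x hx)
    simp only [map_sub, map_add, LinearMap.sub_apply, LinearMap.add_apply, hconj]
      at key1 key2 ⊢
    linear_combination key1 + key2
  -- the four subspaces
  set f₁ : V →ₗ[ℂ] V × V := LinearMap.prod (-p) LinearMap.id with hf₁
  set f₃ : V →ₗ[ℂ] V × V := LinearMap.prod (-pm'') LinearMap.id with hf₃
  set W₁ : Submodule ℂ (V × V) := Submodule.map (LinearMap.inl ℂ V V) mu with hW₁
  set W₂ : Submodule ℂ (V × V) := Submodule.map (LinearMap.inr ℂ V V) lam with hW₂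
  set Δ : Submodule ℂ (V × V) := Submodule.map f₁ lam with hΔ
  set Γ : Submodule ℂ (V × V) := Submodule.map f₃ lam with hΓ
  have hπp : ∀ x : V, pi'' (p x) = pi'' x := by
    intro x
    have h1 : pi'' (x - p x) = 0 := hπdl _ (hp2 x)
    rw [map_sub] at h1
    linear_combination (norm := module) -h1
  have hπq : ∀ x : V, pi'' (pm'' x) = pi'' x - (x - pm'' x) := by
    intro x
    have h1 : pi'' (x - pm'' x) = x - pm'' x := hπdpp _ (hq2 x)
    rw [map_sub] at h1
    linear_combination (norm := module) -h1
  -- decomposition 1 : E = W₁ ⊕ Δ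
  have hW₁E : W₁ ≤ E := by
    rintro v ⟨z, hz, rfl⟩
    exact ⟨hz, Submodule.zero_mem lam⟩
  have hΔE : Δ ≤ E := by
    rintro v ⟨x, hx, rfl⟩
    exact ⟨Submodule.neg_mem _ (hp1 x), hx⟩
  have hsup1 : W₁ ⊔ Δ = E := by
    apply le_antisymm (sup_le hW₁E hΔE)
    rintro ⟨z, x⟩ ⟨hz, hx⟩
    apply Submodule.mem_sup.mpr
    refine ⟨(z + p x, 0), ⟨z + p x, Submodule.add_mem _ hz (hp1 x), rfl⟩,
      (-(p x), x), ⟨x, hx, rfl⟩, ?_⟩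
    ext
    · simp
    · simp
  have hinf1 : W₁ ⊓ Δ = ⊥ := by
    rw [Submodule.eq_bot_iff]
    rintro v ⟨⟨z, hz, rfl⟩, ⟨x, hx, hveq⟩⟩
    have hx0 : x = 0 := by
      have h2 := congrArg Prod.snd hveq
      simpa [hf₁] using h2
    rw [hx0, map_zero] at hveq
    simpa using hveq.symm
  have hinlapp : ∀ z : V, (LinearMap.inl ℂ V V) z = ((z, 0) : V × V) := fun z => rfl
  have hinrapp : ∀ x : V, (LinearMap.inr ℂ V V) x = ((0, x) : V × V) := fun x => rfl
  have hf₁app : ∀ x : V, f₁ x = ((-(p x), x) : V × V) := fun x => rfl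
  have hf₃app : ∀ x : V, f₃ x = ((-(pm'' x), x) : V × V) := fun x => rfl
  have hortho1 : ∀ a ∈ W₁, ∀ b ∈ Δ, Φ a b = 0 := by
    rintro a ⟨z', hz', rfl⟩ b ⟨x, hx, rfl⟩
    rw [hinlapp, hf₁app, hΦapp]
    have h1 := hM z' x
    have h2 : pi'' (-(p x)) = -(pi'' x) := by rw [map_neg, hπp]
    rw [h2]
    simp only [map_sub, map_add, map_neg, map_zero, LinearMap.sub_apply, LinearMap.add_apply,
      LinearMap.neg_apply, LinearMap.zero_apply]
    linear_combination hmu z' hz' (p x) (hp1 x) - h1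
  have hdiagΔ : ∀ x ∈ lam, Φ (f₁ x) (f₁ x) = ω x (p x) := by
    intro x hx
    rw [hf₁app, hΦapp]
    have h1 := hM (p x) x
    rw [hπp] at h1
    have h2 : pi'' (-(p x)) = -(pi'' x) := by rw [map_neg, hπp]
    rw [h2]
    simp only [map_sub, map_add, map_neg, map_zero, LinearMap.sub_apply, LinearMap.add_apply,
      LinearMap.neg_apply, LinearMap.zero_apply]
    linear_combination h1 - hmu (p x) (hp1 x) (p x) (hp1 x) - hlam x hx x hx
  -- decomposition 2 : E = W₂ ⊕ Γ
  have hW₂E : W₂ ≤ E := by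
    rintro v ⟨x, hx, rfl⟩
    exact ⟨Submodule.zero_mem mu, hx⟩
  have hΓE : Γ ≤ E := by
    rintro v ⟨x, hx, rfl⟩
    exact ⟨Submodule.neg_mem _ (hq1 x), hx⟩
  have hGsurj : ∀ z ∈ mu, ∃ x ∈ lam, pm'' x = z := by
    set G : ↥lam →ₗ[ℂ] ↥mu :=
      LinearMap.codRestrict mu (pm''.comp lam.subtype) (fun x => hq1 x) with hG
    have hGinj : Function.Injective G := by
      rw [← LinearMap.ker_eq_bot, Submodule.eq_bot_iff]
      rintro ⟨x, hx⟩ hker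
      have h0 : pm'' x = 0 := by
        have := congrArg (Subtype.val) hker
        exact this
      have hxd : x ∈ dpp ⊓ lam := by
        refine ⟨?_, hx⟩
        have h2 := hq2 x
        rwa [h0, sub_zero] at h2
      rw [hdisj_dpp_lam] at hxd
      exact Subtype.ext hxd
    have hGsur : Function.Surjective G :=
      (LinearMap.injective_iff_surjective_of_finrank_eq_finrank hrank).mp hGinj
    intro z hz
    obtain ⟨⟨x, hx⟩, hxz⟩ := hGsur ⟨z, hz⟩
    refine ⟨x, hx, ?_⟩
    have := congrArg Subtype.val hxz
    exact this
  have hsup2 : W₂ ⊔ Γ = E := by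
    apply le_antisymm (sup_le hW₂E hΓE)
    rintro ⟨z, x⟩ ⟨hz, hx⟩
    obtain ⟨x₁, hx₁, hpmx₁⟩ := hGsurj (-z) (Submodule.neg_mem _ hz)
    apply Submodule.mem_sup.mpr
    refine ⟨(0, x - x₁), ⟨x - x₁, Submodule.sub_mem _ hx hx₁, rfl⟩,
      (-(pm'' x₁), x₁), ⟨x₁, hx₁, rfl⟩, ?_⟩
    rw [hpmx₁]
    ext
    · simp
    · simp
  have hinf2 : W₂ ⊓ Γ = ⊥ := by
    rw [Submodule.eq_bot_iff]
    rintro v ⟨⟨x', hx', rfl⟩, ⟨x, hx, hveq⟩⟩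
    rw [hf₃app, hinrapp] at hveq
    have h1 : -(pm'' x) = 0 := congrArg Prod.fst hveq
    have h2 : x = x' := congrArg Prod.snd hveq
    have hxd : x ∈ dpp ⊓ lam := by
      refine ⟨?_, hx⟩
      have h3 := hq2 x
      have h4 : pm'' x = 0 := by linear_combination (norm := module) -h1
      rwa [h4, sub_zero] at h3
    rw [hdisj_dpp_lam] at hxd
    have hx0 : x = 0 := hxd
    rw [hinrapp, ← h2, hx0]
    rfl
  have hortho2 : ∀ a ∈ W₂, ∀ b ∈ Γ, Φ a b = 0 := by
    rintro a ⟨x', hx', rfl⟩ b ⟨x, hx, rfl⟩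
    rw [hinrapp, hf₃app, hΦapp]
    have h2 : pi'' (-(pm'' x)) = -(pi'' x - (x - pm'' x)) := by rw [map_neg, hπq]
    rw [h2]
    simp only [map_sub, map_add, map_neg, map_zero, LinearMap.sub_apply, LinearMap.add_apply,
      LinearMap.neg_apply, LinearMap.zero_apply]
    ring
  have hdiagΓ : ∀ x ∈ lam, Φ (f₃ x) (f₃ x) = -(ω (pm'' x) x) := by
    intro x hx
    rw [hf₃app, hΦapp]
    have h1 := hM (pm'' x) x
    rw [hπq] at h1
    have h2 : pi'' (-(pm'' x)) = -(pi'' x - (x - pm'' x)) := by rw [map_neg, hπq]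
    rw [h2]
    simp only [map_sub, map_add, map_neg, map_zero, LinearMap.sub_apply, LinearMap.add_apply,
      LinearMap.neg_apply, LinearMap.zero_apply] at h1 ⊢
    linear_combination h1
  -- put it together
  have eq1 := negIdx_add_of_orthogonal Φ hHerm hW₁E hΔE hsup1 hinf1 hortho1
  have eq2 := negIdx_add_of_orthogonal Φ hHerm hW₂E hΓE hsup2 hinf2 hortho2
  have c1 : negIdx Φ W₁ = negIdx (pullForm ω LinearMap.id pi'') mu := by
    rw [hW₁]
    apply negIdx_congr (pullForm ω LinearMap.id pi'') Φ (LinearMap.inl ℂ V V)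
      LinearMap.inl_injective mu
    intro z hz
    rw [hinlapp, hΦapp]
    simp only [pullForm_apply, LinearMap.id_coe, id_eq, map_sub, map_zero,
      LinearMap.zero_apply]
    rw [hmu z hz z hz]
    simp
  have c2 : negIdx Φ Δ = negIdx (pullForm ω LinearMap.id p) lam := by
    rw [hΔ]
    refine negIdx_congr (pullForm ω LinearMap.id p) Φ f₁ ?_ lam ?_
    · intro a b hab
      have := congrArg Prod.snd hab
      simpa [hf₁] using this
    · intro x hx
      rw [hdiagΔ x hx]
      simp
  have c3 : negIdx Φ W₂ = negIdx (pullForm ω LinearMap.id pi'') lam := by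
    rw [hW₂]
    apply negIdx_congr (pullForm ω LinearMap.id pi'') Φ (LinearMap.inr ℂ V V)
      LinearMap.inr_injective lam
    intro x hx
    rw [hinrapp, hΦapp]
    simp only [pullForm_apply, LinearMap.id_coe, id_eq, map_sub, map_zero,
      LinearMap.zero_apply]
    rw [hlam x hx x hx]
    simp
  have c4 : negIdx Φ Γ = negIdx (pullForm ω LinearMap.id pm'') lam := by
    rw [hΓ]
    refine negIdx_congr (pullForm ω LinearMap.id pm'') Φ f₃ ?_ lam ?_
    · intro a b hab
      have := congrArg Prod.snd hab
      simpa [hf₃] using this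
    · intro x hx
      rw [hdiagΓ x hx]
      simp only [pullForm_apply, LinearMap.id_coe, id_eq]
      rw [← hconj x (pm'' x)]
      simp
  rw [c1, c2] at eq1
  rw [c3, c4] at eq2
  omega

end KeyLemma
section Convert

variable {V : Type*} [AddCommGroup V] [Module ℂ V] [FiniteDimensional ℂ V]
variable (ω : V →ₗ[ℂ] V →ₗ⋆[ℂ] ℂ)

theorem negIndexQ_eq_negIdx (lam dl mu : Submodule ℂ V) (p : V →ₗ[ℂ] V)
    (hp1 : ∀ v, p v ∈ mu) (hp2 : ∀ v, v - p v ∈ dl)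
    (hdisj : dl ⊓ mu = ⊥) (hsup : dl ⊔ mu = ⊤) :
    negIndexQ ω lam dl mu = negIdx (pullForm ω LinearMap.id p) lam := by
  unfold negIndexQ negIdx
  congr 1
  ext k
  constructor
  · rintro ⟨W, hWle, rfl, hcond⟩
    refine ⟨W, by rwa [hsup, inf_top_eq] at hWle, rfl, ?_⟩
    intro x hx hx0
    have h1 : p x - x ∈ dl := by
      have := hp2 x
      have h2 : p x - x = -(x - p x) := by abel
      rw [h2]
      exact Submodule.neg_mem _ this
    have heq : x = -(p x - x) + p x := by abel
    have := hcond x hx hx0 (p x - x) h1 (p x) (hp1 x) heq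
    simpa using this
  · rintro ⟨W, hWle, rfl, hcond⟩
    refine ⟨W, le_inf hWle (le_trans hWle (by rw [hsup]; exact le_top)), rfl, ?_⟩
    intro x hx hx0 y hy z hz hxyz
    have hzp : z = p x := by
      have h1 : z - p x ∈ mu := Submodule.sub_mem _ hz (hp1 x)
      have h2 : z - p x ∈ dl := by
        have h3 : z - p x = y + (x - p x) := by
          rw [hxyz]; abel
        rw [h3]
        exact Submodule.add_mem _ hy (hp2 x)
      have : z - p x ∈ dl ⊓ mu := ⟨h2, h1⟩
      rw [hdisj] at this
      have h0 : z - p x = 0 := this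
      linear_combination (norm := abel) h0
    rw [hzp]
    simpa using hcond x hx hx0

end Convert

section Exists

variable {V : Type*} [AddCommGroup V] [Module ℂ V] [FiniteDimensional ℂ V]

/-- the (negated) conjugate-linear functional `q ↦ -⟨r,q⟩` -/
noncomputable def negPair {n : ℕ} {W : Type*} [AddCommGroup W] [Module ℂ W]
    (b : Basis (Fin n) ℂ W) (r : W) : W →ₗ⋆[ℂ] ℂ where
  toFun q := -∑ i, (starRingEnd ℂ) (b.repr q i) * (b.repr r i)
  map_add' q q' := by
    simp only [map_add, Finsupp.add_apply, map_add, add_mul, Finset.sum_add_distrib, neg_add]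
  map_smul' c q := by
    simp only [map_smul, Finsupp.smul_apply, smul_eq_mul, map_mul, mul_assoc,
      RingHom.id_apply]
    rw [← Finset.mul_sum, ← mul_neg]

@[simp] theorem negPair_apply {n : ℕ} {W : Type*} [AddCommGroup W] [Module ℂ W]
    (b : Basis (Fin n) ℂ W) (r : W) (q : W) :
    negPair b r q = -∑ i, (starRingEnd ℂ) (b.repr q i) * (b.repr r i) := rfl

/-- `negPair` bundled as a linear map in `r` -/
noncomputable def negPairL {n : ℕ} {W : Type*} [AddCommGroup W] [Module ℂ W]
    (b : Basis (Fin n) ℂ W) : W →ₗ[ℂ] (W →ₗ⋆[ℂ] ℂ) where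
  toFun := negPair b
  map_add' r r' := by
    ext q
    simp only [negPair_apply, map_add, Finsupp.add_apply, mul_add, Finset.sum_add_distrib,
      neg_add, LinearMap.add_apply]
  map_smul' c r := by
    ext q
    simp only [negPair_apply, map_smul, Finsupp.smul_apply, smul_eq_mul, RingHom.id_apply,
      LinearMap.smul_apply]
    rw [mul_neg, Finset.mul_sum]
    congr 1
    exact Finset.sum_congr rfl fun i _ => by ring

variable (ω : V →ₗ[ℂ] V →ₗ⋆[ℂ] ℂ)

theorem exists_transverse
    (hSkew : ∀ x y : V, ω y x = -(starRingEnd ℂ) (ω x y))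
    (hNd : ∀ x : V, (∀ y : V, ω x y = 0) → x = 0)
    (bet dl : Submodule ℂ V)
    (hbet : bet = symplAnn ω bet) (hdl : dl = symplAnn ω dl)
    (hdisj : dl ⊓ bet = ⊥) (Ls : Finset (Submodule ℂ V))
    (hLs : ∀ L ∈ Ls, L = symplAnn ω L) :
    ∃ dpp : Submodule ℂ V, dpp = symplAnn ω dpp ∧ ∀ L ∈ Ls, dpp ⊓ L = ⊥ := by
  classical
  have hbetIso : ∀ a ∈ bet, ∀ b ∈ bet, ω a b = 0 := by
    intro a ha b hb
    rw [hbet] at ha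
    exact ha b hb
  have hdlIso : ∀ a ∈ dl, ∀ b ∈ dl, ω a b = 0 := by
    intro a ha b hb
    rw [hdl] at ha
    exact ha b hb
  have hc : IsCompl dl bet := lagrangian_isCompl ω hNd hdl hbet hdisj
  have hfr_bet := lagrangian_finrank ω hNd hbet
  have hfr_dl := lagrangian_finrank ω hNd hdl
  set Θ' : ↥dl →ₗ[ℂ] (↥bet →ₗ⋆[ℂ] ℂ) := (omRestrict ω bet).comp dl.subtype with hΘ'
  have hΘinj : Function.Injective Θ' := by
    rw [← LinearMap.ker_eq_bot, Submodule.eq_bot_iff]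
    rintro ⟨v, hv⟩ hker
    have hv0 : ∀ y ∈ bet, ω v y = 0 := by
      intro y hy
      have := congrFun (congrArg DFunLike.coe hker) ⟨y, hy⟩
      simpa [hΘ', omRestrict] using this
    have hvz : ∀ y : V, ω v y = 0 := by
      intro y
      have hy : y ∈ dl ⊔ bet := by rw [hc.sup_eq_top]; trivial
      obtain ⟨a, ha, b, hb, rfl⟩ := Submodule.mem_sup.mp hy
      rw [map_add, hdlIso v hv a ha, hv0 b hb, add_zero]
    exact Subtype.ext (hNd v hvz)
  have hfrank_eq : finrank ℂ ↥dl = finrank ℂ (↥bet →ₗ⋆[ℂ] ℂ) := by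
    rw [finrank_conjDual]
    omega
  have hΘsur : Function.Surjective Θ' :=
    (LinearMap.injective_iff_surjective_of_finrank_eq_finrank hfrank_eq).mp hΘinj
  set Θe : ↥dl ≃ₗ[ℂ] (↥bet →ₗ⋆[ℂ] ℂ) := LinearEquiv.ofBijective Θ' ⟨hΘinj, hΘsur⟩ with hΘe
  set b : Basis (Fin (finrank ℂ ↥bet)) ℂ ↥bet := Module.finBasis ℂ ↥bet with hb
  set gip : ↥bet → ↥bet → ℂ :=
    fun q r => ∑ i, (starRingEnd ℂ) (b.repr r i) * (b.repr q i) with hgip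
  have hgipconj : ∀ q r, (starRingEnd ℂ) (gip q r) = gip r q := by
    intro q r
    simp only [hgip, map_sum, map_mul, Complex.conj_conj]
    congr 1
    funext i
    ring
  have hgipzero : ∀ q : ↥bet, gip q q = 0 → q = 0 := by
    intro q hq
    have h1 : gip q q = ((∑ i, Complex.normSq (b.repr q i) : ℝ) : ℂ) := by
      simp only [hgip]
      push_cast
      congr 1
      funext i
      rw [mul_comm, Complex.mul_conj]
    rw [h1] at hq
    have h2 : (∑ i, Complex.normSq (b.repr q i)) = 0 := by exact_mod_cast hq
    have h3 : ∀ i, Complex.normSq (b.repr q i) = 0 := by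
      intro i
      have := Finset.sum_eq_zero_iff_of_nonneg
        (fun i _ => Complex.normSq_nonneg (b.repr q i)) |>.mp h2
      exact this i (Finset.mem_univ i)
    have h4 : b.repr q = 0 := by
      ext i
      simpa using Complex.normSq_eq_zero.mp (h3 i)
    exact b.repr.map_eq_zero_iff.mp h4
  set GipL : ↥bet → (↥bet →ₗ[ℂ] ℂ) :=
    fun r => ∑ i, (starRingEnd ℂ) (b.repr r i) • (b.coord i) with hGipL
  have hGipLapp : ∀ r q, GipL r q = gip q r := by
    intro r q
    simp [hGipL, hgip, Basis.coord_apply]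
  set J : ↥bet →ₗ[ℂ] V :=
    dl.subtype.comp ((Θe.symm : (↥bet →ₗ⋆[ℂ] ℂ) →ₗ[ℂ] ↥dl).comp (negPairL b)) with hJ
  have hJdl : ∀ r, J r ∈ dl := fun r => (Θe.symm (negPairL b r)).2
  have hJval : ∀ r q : ↥bet, ω (J r) (q : V) = -(gip r q) := by
    intro r q
    have h1 : Θ' (Θe.symm (negPairL b r)) = negPairL b r := Θe.apply_symm_apply _
    have h2 := congrFun (congrArg DFunLike.coe h1) q
    have h3 : ω ((Θe.symm (negPairL b r) : V)) (q : V) = negPair b r q := by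
      simpa [hΘ', omRestrict, negPairL] using h2
    rw [hJ]
    simp only [LinearMap.comp_apply, Submodule.subtype_apply, LinearEquiv.coe_coe]
    rw [h3, negPair_apply]
  have hJval2 : ∀ q r : ↥bet, ω (q : V) (J r) = gip q r := by
    intro q r
    rw [hSkew (J r) (q : V), hJval r q]
    rw [map_neg, hgipconj r q]
    ring
  set ι : ℝ → (↥bet →ₗ[ℂ] V) := fun t => bet.subtype + (t : ℂ) • J with hι
  have hιapp : ∀ t (a : ↥bet), ι t a = (a : V) + (t : ℂ) • J a := fun t a => rfl
  have hιinj : ∀ t, Function.Injective (ι t) := by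
    intro t
    rw [← LinearMap.ker_eq_bot, Submodule.eq_bot_iff]
    intro a ha
    have h0 : (a : V) + (t : ℂ) • J a = 0 := ha
    have h1 : (a : V) ∈ dl ⊓ bet := by
      constructor
      · have h2 : (a : V) = -((t : ℂ) • J a) := by linear_combination (norm := abel) h0
        rw [h2]
        exact Submodule.neg_mem _ (Submodule.smul_mem _ _ (hJdl a))
      · exact a.2
    rw [hdisj] at h1
    exact Subtype.ext h1
  have hιpair : ∀ t s : ℝ, ∀ a c : ↥bet,
      ω (ι t a) (ι s c) = ((s : ℂ) - (t : ℂ)) * gip a c := by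
    intro t s a c
    rw [hιapp, hιapp]
    simp only [map_add, LinearMap.add_apply, LinearMap.map_smulₛₗ, map_smul,
      LinearMap.smul_apply, Complex.conj_ofReal, smul_eq_mul]
    rw [hbetIso _ a.2 _ c.2, hJval2 a c, hJval a c, hdlIso _ (hJdl a) _ (hJdl c)]
    ring
  have hιiso : ∀ t : ℝ, ∀ x ∈ LinearMap.range (ι t), ∀ y ∈ LinearMap.range (ι t),
      ω x y = 0 := by
    rintro t x ⟨a, rfl⟩ y ⟨c, rfl⟩
    rw [hιpair t t a c]
    ring
  have hιfr : ∀ t : ℝ, finrank ℂ (LinearMap.range (ι t)) = finrank ℂ ↥bet := by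
    intro t
    exact (LinearEquiv.finrank_eq (LinearEquiv.ofInjective (ι t) (hιinj t))).symm
  have hιlag : ∀ t : ℝ, LinearMap.range (ι t) = symplAnn ω (LinearMap.range (ι t)) := by
    intro t
    have hle : LinearMap.range (ι t) ≤ symplAnn ω (LinearMap.range (ι t)) :=
      fun x hx y hy => hιiso t x hx y hy
    apply Submodule.eq_of_le_of_finrank_eq hle
    have h1 := finrank_symplAnn ω hNd (LinearMap.range (ι t))
    rw [hιfr t] at h1 ⊢
    omega
  have hbad : ∀ L ∈ Ls, {t : ℝ | LinearMap.range (ι t) ⊓ L ≠ ⊥}.Finite := by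
    intro L hL
    have hLiso : ∀ a ∈ L, ∀ b ∈ L, ω a b = 0 := by
      intro a ha b hb
      rw [hLs L hL] at ha
      exact ha b hb
    set T := {t : ℝ | LinearMap.range (ι t) ⊓ L ≠ ⊥} with hT
    by_contra hinf
    have : Infinite ↥T := Set.infinite_coe_iff.mpr hinf
    have hwit : ∀ t : ↥T, ∃ q : ↥bet, q ≠ 0 ∧ ι (t : ℝ) q ∈ L := by
      rintro ⟨t, ht⟩
      obtain ⟨v, hv, hv0⟩ := Submodule.exists_mem_ne_zero_of_ne_bot ht
      obtain ⟨q, hq⟩ := hv.1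
      refine ⟨q, ?_, ?_⟩
      · rintro rfl
        rw [map_zero] at hq
        exact hv0 hq.symm
      · rw [hq]
        exact hv.2
    choose f hf0 hfL using hwit
    have hforth : ∀ t s : ↥T, t ≠ s → gip (f t) (f s) = 0 := by
      intro t s hts
      have h0 : ω (ι (t : ℝ) (f t)) (ι (s : ℝ) (f s)) = 0 :=
        hLiso _ (hfL t) _ (hfL s)
      rw [hιpair] at h0
      rcases mul_eq_zero.mp h0 with h | h
      · exfalso
        apply hts
        have h1 : ((s : ℝ) : ℂ) = ((t : ℝ) : ℂ) := by linear_combination h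
        have h2 : (s : ℝ) = (t : ℝ) := by exact_mod_cast h1
        exact Subtype.ext h2.symm
      · exact h
    have hli : LinearIndependent ℂ f := by
      rw [linearIndependent_iff']
      intro S g hsum j hj
      have happ := congrArg (GipL (f j)) hsum
      rw [map_sum, map_zero] at happ
      have hsingle : ∀ i ∈ S, i ≠ j → GipL (f j) (g i • f i) = 0 := by
        intro i hi hij
        rw [map_smul, smul_eq_mul, hGipLapp, hforth i j hij, mul_zero]
      rw [Finset.sum_eq_single_of_mem j hj hsingle] at happ
      rw [map_smul, smul_eq_mul, hGipLapp] at happ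
      rcases mul_eq_zero.mp happ with h | h
      · exact h
      · exact absurd (hgipzero _ h) (hf0 j)
    exact Module.Finite.not_linearIndependent_of_infinite f hli
  have hfin : (⋃ L ∈ Ls, {t : ℝ | LinearMap.range (ι t) ⊓ L ≠ ⊥}).Finite :=
    Set.Finite.biUnion Ls.finite_toSet hbad
  obtain ⟨t, ht⟩ := hfin.infinite_compl.nonempty
  refine ⟨LinearMap.range (ι t), hιlag t, ?_⟩
  intro L hL
  by_contra hne
  exact ht (Set.mem_biUnion hL hne)

end Exists
theorem stmt13 {V : Type*} [AddCommGroup V] [Module ℂ V] [FiniteDimensional ℂ V]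
    (n : ℕ) (hdim : Module.finrank ℂ V = 2 * n)
    (ω : V →ₗ[ℂ] V →ₗ⋆[ℂ] ℂ)
    (hSkew : ∀ x y : V, ω y x = -(starRingEnd ℂ) (ω x y))
    (hNd : ∀ x : V, (∀ y : V, ω x y = 0) → x = 0)
    (α β γ δ δ' : Submodule ℂ V)
    (hα : α = symplAnn ω α) (hβ : β = symplAnn ω β) (hγ : γ = symplAnn ω γ)
    (hδ : δ = symplAnn ω δ) (hδ' : δ' = symplAnn ω δ')
    (hδα : δ ⊓ α = ⊥) (hδβ : δ ⊓ β = ⊥) (hδγ : δ ⊓ γ = ⊥)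
    (hδ'α : δ' ⊓ α = ⊥) (hδ'β : δ' ⊓ β = ⊥) (hδ'γ : δ' ⊓ γ = ⊥) :
    negIndexQ ω α δ β + negIndexQ ω β δ γ + negIndexQ ω α δ' γ =
      negIndexQ ω α δ' β + negIndexQ ω β δ' γ + negIndexQ ω α δ γ := by
  classical
  have hIso : ∀ L : Submodule ℂ V, L = symplAnn ω L → ∀ a ∈ L, ∀ b ∈ L, ω a b = 0 := by
    intro L hL a ha b hb
    rw [hL] at ha
    exact ha b hb
  obtain ⟨dpp, hdppLag, hdppT⟩ := exists_transverse ω hSkew hNd β δ hβ hδ hδβ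
    {α, β, γ, δ, δ'} (by
      intro L hL
      simp only [Finset.mem_insert, Finset.mem_singleton] at hL
      rcases hL with rfl | rfl | rfl | rfl | rfl <;> assumption)
  have hTα : dpp ⊓ α = ⊥ := hdppT α (by simp)
  have hTβ : dpp ⊓ β = ⊥ := hdppT β (by simp)
  have hTγ : dpp ⊓ γ = ⊥ := hdppT γ (by simp)
  have hTδ : dpp ⊓ δ = ⊥ := hdppT δ (by simp)
  have hTδ' : dpp ⊓ δ' = ⊥ := hdppT δ' (by simp)
  have hfrα := lagrangian_finrank ω hNd hα
  have hfrβ := lagrangian_finrank ω hNd hβ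
  have hfrγ := lagrangian_finrank ω hNd hγ
  have mkproj : ∀ A B : Submodule ℂ V, IsCompl A B →
      ∃ p : V →ₗ[ℂ] V, (∀ v, p v ∈ B) ∧ (∀ v, v - p v ∈ A) := by
    intro A B h
    refine ⟨B.subtype.comp (B.linearProjOfIsCompl A h.symm),
      fun v => (B.linearProjOfIsCompl A h.symm v).2, fun v => ?_⟩
    have h1 : (A.linearProjOfIsCompl B h v : V) + (B.linearProjOfIsCompl A h.symm v : V) = v :=
      Submodule.projection_add_projection_eq_self h v
    have h2 : v - (B.subtype.comp (B.linearProjOfIsCompl A h.symm)) v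
        = (A.linearProjOfIsCompl B h v : V) := by
      simp only [LinearMap.comp_apply, Submodule.subtype_apply]
      linear_combination (norm := abel) -h1
    rw [h2]
    exact (A.linearProjOfIsCompl B h v).2
  have cδβ : IsCompl δ β := lagrangian_isCompl ω hNd hδ hβ hδβ
  have cδγ : IsCompl δ γ := lagrangian_isCompl ω hNd hδ hγ hδγ
  have cδ'β : IsCompl δ' β := lagrangian_isCompl ω hNd hδ' hβ hδ'β
  have cδ'γ : IsCompl δ' γ := lagrangian_isCompl ω hNd hδ' hγ hδ'γ
  have cδdpp : IsCompl δ dpp :=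
    lagrangian_isCompl ω hNd hδ hdppLag (by rw [inf_comm]; exact hTδ)
  have cδ'dpp : IsCompl δ' dpp :=
    lagrangian_isCompl ω hNd hδ' hdppLag (by rw [inf_comm]; exact hTδ')
  have cdppβ : IsCompl dpp β := lagrangian_isCompl ω hNd hdppLag hβ hTβ
  have cdppγ : IsCompl dpp γ := lagrangian_isCompl ω hNd hdppLag hγ hTγ
  obtain ⟨pπ, hpπ1, hpπ2⟩ := mkproj δ dpp cδdpp
  obtain ⟨pπ', hpπ'1, hpπ'2⟩ := mkproj δ' dpp cδ'dpp
  obtain ⟨pb, hpb1, hpb2⟩ := mkproj δ β cδβ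
  obtain ⟨pc, hpc1, hpc2⟩ := mkproj δ γ cδγ
  obtain ⟨pb', hpb'1, hpb'2⟩ := mkproj δ' β cδ'β
  obtain ⟨pc', hpc'1, hpc'2⟩ := mkproj δ' γ cδ'γ
  obtain ⟨qb, hqb1, hqb2⟩ := mkproj dpp β cdppβ
  obtain ⟨qc, hqc1, hqc2⟩ := mkproj dpp γ cdppγ
  -- conversions
  have cv_dβ : ∀ lam, negIndexQ ω lam δ β = negIdx (pullForm ω LinearMap.id pb) lam :=
    fun lam => negIndexQ_eq_negIdx ω lam δ β pb hpb1 hpb2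
      (disjoint_iff.mp cδβ.disjoint) (codisjoint_iff.mp cδβ.codisjoint)
  have cv_dγ : ∀ lam, negIndexQ ω lam δ γ = negIdx (pullForm ω LinearMap.id pc) lam :=
    fun lam => negIndexQ_eq_negIdx ω lam δ γ pc hpc1 hpc2
      (disjoint_iff.mp cδγ.disjoint) (codisjoint_iff.mp cδγ.codisjoint)
  have cv_d'β : ∀ lam, negIndexQ ω lam δ' β = negIdx (pullForm ω LinearMap.id pb') lam :=
    fun lam => negIndexQ_eq_negIdx ω lam δ' β pb' hpb'1 hpb'2
      (disjoint_iff.mp cδ'β.disjoint) (codisjoint_iff.mp cδ'β.codisjoint)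
  have cv_d'γ : ∀ lam, negIndexQ ω lam δ' γ = negIdx (pullForm ω LinearMap.id pc') lam :=
    fun lam => negIndexQ_eq_negIdx ω lam δ' γ pc' hpc'1 hpc'2
      (disjoint_iff.mp cδ'γ.disjoint) (codisjoint_iff.mp cδ'γ.codisjoint)
  have cv_ddpp : ∀ lam, negIndexQ ω lam δ dpp = negIdx (pullForm ω LinearMap.id pπ) lam :=
    fun lam => negIndexQ_eq_negIdx ω lam δ dpp pπ hpπ1 hpπ2
      (disjoint_iff.mp cδdpp.disjoint) (codisjoint_iff.mp cδdpp.codisjoint)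
  have cv_d'dpp : ∀ lam, negIndexQ ω lam δ' dpp = negIdx (pullForm ω LinearMap.id pπ') lam :=
    fun lam => negIndexQ_eq_negIdx ω lam δ' dpp pπ' hpπ'1 hpπ'2
      (disjoint_iff.mp cδ'dpp.disjoint) (codisjoint_iff.mp cδ'dpp.codisjoint)
  have cv_dppβ : ∀ lam, negIndexQ ω lam dpp β = negIdx (pullForm ω LinearMap.id qb) lam :=
    fun lam => negIndexQ_eq_negIdx ω lam dpp β qb hqb1 hqb2
      (disjoint_iff.mp cdppβ.disjoint) (codisjoint_iff.mp cdppβ.codisjoint)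
  have cv_dppγ : ∀ lam, negIndexQ ω lam dpp γ = negIdx (pullForm ω LinearMap.id qc) lam :=
    fun lam => negIndexQ_eq_negIdx ω lam dpp γ qc hqc1 hqc2
      (disjoint_iff.mp cdppγ.disjoint) (codisjoint_iff.mp cdppγ.codisjoint)
  -- the six key-lemma instances
  have E1 := key_lemma ω hSkew α β δ dpp (hIso α hα) (hIso β hβ) (hIso δ hδ)
    (hIso dpp hdppLag) (disjoint_iff.mp cδdpp.disjoint) hTα hTβ
    (by omega) pπ pb qb hpπ1 hpπ2 hpb1 hpb2 hqb1 hqb2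
  have E2 := key_lemma ω hSkew β γ δ dpp (hIso β hβ) (hIso γ hγ) (hIso δ hδ)
    (hIso dpp hdppLag) (disjoint_iff.mp cδdpp.disjoint) hTβ hTγ
    (by omega) pπ pc qc hpπ1 hpπ2 hpc1 hpc2 hqc1 hqc2
  have E3 := key_lemma ω hSkew α γ δ dpp (hIso α hα) (hIso γ hγ) (hIso δ hδ)
    (hIso dpp hdppLag) (disjoint_iff.mp cδdpp.disjoint) hTα hTγ
    (by omega) pπ pc qc hpπ1 hpπ2 hpc1 hpc2 hqc1 hqc2
  have E4 := key_lemma ω hSkew α β δ' dpp (hIso α hα) (hIso β hβ) (hIso δ' hδ')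
    (hIso dpp hdppLag) (disjoint_iff.mp cδ'dpp.disjoint) hTα hTβ
    (by omega) pπ' pb' qb hpπ'1 hpπ'2 hpb'1 hpb'2 hqb1 hqb2
  have E5 := key_lemma ω hSkew β γ δ' dpp (hIso β hβ) (hIso γ hγ) (hIso δ' hδ')
    (hIso dpp hdppLag) (disjoint_iff.mp cδ'dpp.disjoint) hTβ hTγ
    (by omega) pπ' pc' qc hpπ'1 hpπ'2 hpc'1 hpc'2 hqc1 hqc2
  have E6 := key_lemma ω hSkew α γ δ' dpp (hIso α hα) (hIso γ hγ) (hIso δ' hδ')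
    (hIso dpp hdppLag) (disjoint_iff.mp cδ'dpp.disjoint) hTα hTγ
    (by omega) pπ' pc' qc hpπ'1 hpπ'2 hpc'1 hpc'2 hqc1 hqc2
  rw [← cv_ddpp β, ← cv_dβ α, ← cv_ddpp α, ← cv_dppβ α] at E1
  rw [← cv_ddpp γ, ← cv_dγ β, ← cv_ddpp β, ← cv_dppγ β] at E2
  rw [← cv_ddpp γ, ← cv_dγ α, ← cv_ddpp α, ← cv_dppγ α] at E3
  rw [← cv_d'dpp β, ← cv_d'β α, ← cv_d'dpp α, ← cv_dppβ α] at E4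
  rw [← cv_d'dpp γ, ← cv_d'γ β, ← cv_d'dpp β, ← cv_dppγ β] at E5
  rw [← cv_d'dpp γ, ← cv_d'γ α, ← cv_d'dpp α, ← cv_dppγ α] at E6
  omega
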